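/- Let h ≥ 1 be an integer and t a real number. Then lim_{m→∞} (1/(2m)) Σ_{j=0}^{h−1} (−1)^j e^{h t j/(2m)} C(h−1,j) · (2m+h−j−1)! / (h! (2m−j−1)!) = (1/h) L^{(1)}_{h−1}(ht), where the limit is over natural numbers m → ∞. -/

import Mathlib

open Filter

/-- Biane's limit: `(1/(2m)) ∑_{j=0}^{h−1} (−1)^j e^{htj/(2m)} C(h−1,j) (2m+h−j−1)!/(h!(2m−j−1)!)`
converges, as `m → ∞` over the naturals, to `(1/h) L^{(1)}_{h−1}(ht)`, where
`L^{(1)}_{h−1}(x) = ∑_{l=0}^{h−1} C(h,l+1) (−x)^l / l!`. -/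
lemma nat_id (n h j : ℕ) (hj : j < h) :
    (h-1).choose j * (n + (h-1-j)).choose h
      = ∑ a ∈ Finset.range h, (h-1).choose a * a.choose j * n.choose (a+1) := by
  have h1 : ∑ a ∈ Finset.range h, (h-1).choose a * a.choose j * n.choose (a+1)
      = ∑ a ∈ Finset.Ico j h, (h-1).choose a * a.choose j * n.choose (a+1) := by
    rw [Finset.range_eq_Ico]
    refine (Finset.sum_subset (Finset.Ico_subset_Ico (Nat.zero_le _) le_rfl) ?_).symm
    intro a ha hna
    have : a < j := by
      simp only [Finset.mem_Ico] at ha hna; omega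
    rw [Nat.choose_eq_zero_of_lt this]; ring
  rw [h1, Finset.sum_Ico_eq_sum_range]
  have h2 : ∀ b ∈ Finset.range (h - j),
      (h-1).choose (j+b) * (j+b).choose j * n.choose (j+b+1)
        = (h-1).choose j * ((h-1-j).choose b * n.choose (j+b+1)) := by
    intro b hb
    rw [Finset.mem_range] at hb
    rw [Nat.choose_mul (by omega)]
    have : j + b - j = b := by omega
    rw [this, Nat.mul_assoc]
  rw [Finset.sum_congr rfl h2, ← Finset.mul_sum]
  congr 1
  rw [Nat.add_choose_eq, Finset.Nat.sum_antidiagonal_eq_sum_range_succ_mk]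
  have h3 : ∑ i ∈ Finset.range (h+1), n.choose i * (h-1-j).choose (h - i)
      = ∑ i ∈ Finset.Ico (j+1) (h+1), n.choose i * (h-1-j).choose (h - i) := by
    rw [Finset.range_eq_Ico]
    refine (Finset.sum_subset (Finset.Ico_subset_Ico (Nat.zero_le _) le_rfl) ?_).symm
    intro i hi hni
    simp only [Finset.mem_Ico] at hi hni
    have : h - 1 - j < h - i := by omega
    rw [Nat.choose_eq_zero_of_lt this]; ring
  rw [h3, Finset.sum_Ico_eq_sum_range]
  have : h + 1 - (j + 1) = h - j := by omega
  rw [this]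
  refine Finset.sum_congr rfl ?_
  intro b hb
  rw [Finset.mem_range] at hb
  rw [show j + 1 + b = j + b + 1 by omega]
  rw [show h - (j + b + 1) = (h-1-j) - b by omega, Nat.choose_symm (by omega), Nat.mul_comm]

lemma real_id (h n : ℕ) (x : ℝ) :
    ∑ a ∈ Finset.range h, ((h-1).choose a : ℝ) * (1-x)^a * (n.choose (a+1) : ℝ)
      = ∑ j ∈ Finset.range h,
          (-1:ℝ)^j * x^j * ((h-1).choose j : ℝ) * ((n + (h-1-j)).choose h : ℝ) := by
  have expand : ∀ a ∈ Finset.range h,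
      ((h-1).choose a : ℝ) * (1-x)^a * (n.choose (a+1) : ℝ)
        = ∑ j ∈ Finset.range h,
            ((h-1).choose a : ℝ) * (a.choose j : ℝ) * (-x)^j * (n.choose (a+1) : ℝ) := by
    intro a ha
    rw [Finset.mem_range] at ha
    have hp : (1 - x)^a = ∑ j ∈ Finset.range (a+1), (-x)^j * ((a.choose j : ℕ) : ℝ) := by
      rw [show (1 - x) = (-x) + 1 by ring, add_pow]
      simp
    have hext : ∑ j ∈ Finset.range (a+1), (-x)^j * ((a.choose j : ℕ) : ℝ)
        = ∑ j ∈ Finset.range h, (-x)^j * ((a.choose j : ℕ) : ℝ) := by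
      refine Finset.sum_subset (Finset.range_subset_range.2 (by omega)) ?_
      intro j hj hnj
      simp only [Finset.mem_range] at hj hnj
      rw [Nat.choose_eq_zero_of_lt (by omega)]
      simp
    rw [hp, hext, Finset.mul_sum, Finset.sum_mul]
    exact Finset.sum_congr rfl fun j _ => by ring
  rw [Finset.sum_congr rfl expand, Finset.sum_comm]
  refine Finset.sum_congr rfl ?_
  intro j hj
  rw [Finset.mem_range] at hj
  have key := nat_id n h j hj
  calc ∑ a ∈ Finset.range h,
        ((h-1).choose a : ℝ) * (a.choose j : ℝ) * (-x)^j * (n.choose (a+1) : ℝ)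
      = (-x)^j * ∑ a ∈ Finset.range h,
          (((h-1).choose a * a.choose j * n.choose (a+1) : ℕ) : ℝ) := by
        rw [Finset.mul_sum]
        exact Finset.sum_congr rfl fun a _ => by push_cast; ring
    _ = (-x)^j * (((h-1).choose j * (n + (h-1-j)).choose h : ℕ) : ℝ) := by
        rw [← Nat.cast_sum, ← key]
    _ = (-1:ℝ)^j * x^j * ((h-1).choose j : ℝ) * ((n + (h-1-j)).choose h : ℝ) := by
        push_cast
        rw [neg_pow]
        ring

lemma lim_D (c : ℝ) :
    Tendsto (fun m : ℕ => (1 - Real.exp (c / (2*(m:ℝ)))) * (2*(m:ℝ))) atTop (nhds (-c)) := by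
  have h2m : Tendsto (fun m : ℕ => 2*(m:ℝ)) atTop atTop :=
    (tendsto_natCast_atTop_atTop).const_mul_atTop two_pos
  rcases eq_or_ne c 0 with rfl | hc
  · have : (fun m : ℕ => (1 - Real.exp (0 / (2*(m:ℝ)))) * (2*(m:ℝ))) = fun _ => (0:ℝ) := by
      funext m; simp
    rw [this, neg_zero]
    exact tendsto_const_nhds
  · have hslope : Tendsto (slope Real.exp 0) (nhdsWithin 0 {0}ᶜ) (nhds 1) := by
      have := Real.hasDerivAt_exp 0
      rw [hasDerivAt_iff_tendsto_slope] at this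
      simpa [Real.exp_zero] using this
    have hu : Tendsto (fun m : ℕ => c / (2*(m:ℝ))) atTop (nhdsWithin 0 {0}ᶜ) := by
      rw [tendsto_nhdsWithin_iff]
      constructor
      · exact tendsto_const_nhds.div_atTop h2m
      · filter_upwards [eventually_gt_atTop 0] with m hm
        have hm' : (2*(m:ℝ)) ≠ 0 := by positivity
        simp only [Set.mem_compl_iff, Set.mem_singleton_iff]
        exact div_ne_zero hc hm'
    have h1 := (hslope.comp hu).const_mul (-c)
    rw [mul_one] at h1
    refine h1.congr' ?_
    filter_upwards [eventually_gt_atTop 0] with m hm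
    have hm' : (2*(m:ℝ)) ≠ 0 := by positivity
    simp only [Function.comp_apply]
    rw [slope_def_field]
    rw [Real.exp_zero, sub_zero]
    field_simp
    ring

lemma lim_E (a : ℕ) :
    Tendsto (fun m : ℕ => ((2*m).choose (a+1) : ℝ) / (2*(m:ℝ))^(a+1)) atTop
      (nhds (1/((a+1).factorial : ℝ))) := by
  have h2m : Tendsto (fun m : ℕ => 2*(m:ℝ)) atTop atTop :=
    (tendsto_natCast_atTop_atTop).const_mul_atTop two_pos
  have hprod : Tendsto (fun m : ℕ => ∏ i ∈ Finset.range (a+1), (1 - (i:ℝ)/(2*(m:ℝ))))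
      atTop (nhds 1) := by
    have := tendsto_finset_prod (Finset.range (a+1))
      (fun i _ => (tendsto_const_nhds.sub ((tendsto_const_nhds).div_atTop h2m) :
        Tendsto (fun m : ℕ => 1 - (i:ℝ)/(2*(m:ℝ))) atTop (nhds (1 - 0))))
    simpa using this
  have h1 := hprod.const_mul (1/((a+1).factorial : ℝ))
  rw [mul_one] at h1
  refine h1.congr' ?_
  filter_upwards [eventually_ge_atTop (a+1)] with m hm
  have hm0 : (0:ℝ) < 2*(m:ℝ) := by
    have : (1:ℝ) ≤ (m:ℝ) := by exact_mod_cast Nat.one_le_iff_ne_zero.2 (by omega)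
    linarith
  have key : ((a+1).factorial * (2*m).choose (a+1) : ℕ)
      = ∏ i ∈ Finset.range (a+1), (2*m - i) := by
    rw [← Nat.descFactorial_eq_factorial_mul_choose, Nat.descFactorial_eq_prod_range]
  have hfact : ((2*m).choose (a+1) : ℝ) * ((a+1).factorial : ℝ)
      = ∏ i ∈ Finset.range (a+1), (2*(m:ℝ) - (i:ℝ)) :=
    calc ((2*m).choose (a+1) : ℝ) * ((a+1).factorial : ℝ)
        = ((((a+1).factorial * (2*m).choose (a+1)) : ℕ) : ℝ) := by push_cast; ring
      _ = ((∏ i ∈ Finset.range (a+1), (2*m - i) : ℕ) : ℝ) := by rw [key]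
      _ = ∏ i ∈ Finset.range (a+1), ((2*m - i : ℕ) : ℝ) := Nat.cast_prod _ _
      _ = ∏ i ∈ Finset.range (a+1), (2*(m:ℝ) - (i:ℝ)) := by
          refine Finset.prod_congr rfl (fun i hi => ?_)
          rw [Finset.mem_range] at hi
          rw [Nat.cast_sub (by omega)]
          push_cast; ring
  have hprodeq : ∏ i ∈ Finset.range (a+1), (1 - (i:ℝ)/(2*(m:ℝ)))
      = (∏ i ∈ Finset.range (a+1), (2*(m:ℝ) - (i:ℝ))) / (2*(m:ℝ))^(a+1) :=
    calc ∏ i ∈ Finset.range (a+1), (1 - (i:ℝ)/(2*(m:ℝ)))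
        = ∏ i ∈ Finset.range (a+1), ((2*(m:ℝ) - (i:ℝ))/(2*(m:ℝ))) := by
          refine Finset.prod_congr rfl (fun i _ => ?_)
          rw [sub_div, div_self hm0.ne']
      _ = (∏ i ∈ Finset.range (a+1), (2*(m:ℝ) - (i:ℝ))) / (2*(m:ℝ))^(a+1) := by
          rw [Finset.prod_div_distrib, Finset.prod_const, Finset.card_range]
  rw [hprodeq, ← hfact]
  have hfne : ((a+1).factorial : ℝ) ≠ 0 := Nat.cast_ne_zero.2 (Nat.factorial_ne_zero _)
  field_simp

theorem stmt_3 (h : ℕ) (hh : 1 ≤ h) (t : ℝ) :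
    Tendsto (fun m : ℕ =>
      (1 / (2 * (m : ℝ))) * ∑ j ∈ Finset.range h,
        (-1 : ℝ) ^ j * Real.exp ((h : ℝ) * t * (j : ℝ) / (2 * (m : ℝ))) *
          ((h - 1).choose j : ℝ) *
          ((2 * m + h - j - 1).factorial : ℝ) /
          ((h.factorial : ℝ) * ((2 * m - j - 1).factorial : ℝ)))
      atTop
      (nhds ((1 / (h : ℝ)) *
        ∑ l ∈ Finset.range h, (h.choose (l + 1) : ℝ) * (-((h : ℝ) * t)) ^ l / (l.factorial : ℝ))) := by
  have hlim : Tendsto (fun m : ℕ => ∑ a ∈ Finset.range h,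
      ((h-1).choose a : ℝ) * ((1 - Real.exp ((h:ℝ)*t/(2*(m:ℝ)))) * (2*(m:ℝ)))^a
        * (((2*m).choose (a+1) : ℝ) / (2*(m:ℝ))^(a+1))) atTop
      (nhds (∑ a ∈ Finset.range h,
        ((h-1).choose a : ℝ) * (-((h:ℝ)*t))^a * (1/((a+1).factorial : ℝ)))) := by
    refine tendsto_finset_sum _ (fun a _ => ?_)
    exact (tendsto_const_nhds.mul ((lim_D ((h:ℝ)*t)).pow a)).mul (lim_E a)
  have hval : ∑ a ∈ Finset.range h,
      ((h-1).choose a : ℝ) * (-((h:ℝ)*t))^a * (1/((a+1).factorial:ℝ))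
      = (1/(h:ℝ)) * ∑ l ∈ Finset.range h,
          (h.choose (l+1) : ℝ) * (-((h:ℝ)*t))^l / (l.factorial : ℝ) := by
    rw [Finset.mul_sum]
    refine Finset.sum_congr rfl (fun a _ => ?_)
    have hid : h * (h-1).choose a = h.choose (a+1) * (a+1) := by
      have h1 : h - 1 + 1 = h := by omega
      have := Nat.add_one_mul_choose_eq (h-1) a
      simpa only [h1] using this
    have hcast : (h:ℝ) * ((h-1).choose a : ℝ) = (h.choose (a+1) : ℝ) * ((a:ℝ)+1) := by
      exact_mod_cast hid
    have hfa : ((a+1).factorial : ℝ) = ((a:ℝ)+1) * (a.factorial:ℝ) := by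
      rw [Nat.factorial_succ]; push_cast; ring
    have hh0 : (h:ℝ) ≠ 0 := Nat.cast_ne_zero.2 (by omega)
    have ha0 : (a.factorial : ℝ) ≠ 0 := Nat.cast_ne_zero.2 (Nat.factorial_ne_zero _)
    have ha1 : ((a:ℝ)+1) ≠ 0 := by positivity
    rw [hfa]
    field_simp
    linear_combination ((-((h:ℝ)*t))^a) * hcast
  rw [← hval]
  refine hlim.congr' ?_
  filter_upwards [eventually_ge_atTop h] with m hm
  have hm1 : 1 ≤ m := le_trans hh hm
  have hmpos : (0:ℝ) < (m:ℝ) := by exact_mod_cast Nat.lt_of_lt_of_le Nat.zero_lt_one hm1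
  have hm0 : (2*(m:ℝ)) ≠ 0 := by positivity
  have step1 : ∑ a ∈ Finset.range h,
      ((h-1).choose a : ℝ) * ((1 - Real.exp ((h:ℝ)*t/(2*(m:ℝ)))) * (2*(m:ℝ)))^a
        * (((2*m).choose (a+1) : ℝ) / (2*(m:ℝ))^(a+1))
      = (1/(2*(m:ℝ))) * ∑ a ∈ Finset.range h,
          ((h-1).choose a:ℝ) * (1 - Real.exp ((h:ℝ)*t/(2*(m:ℝ))))^a * ((2*m).choose (a+1):ℝ) := by
    rw [Finset.mul_sum]
    refine Finset.sum_congr rfl fun a _ => ?_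
    rw [mul_pow]
    field_simp
    ring
  rw [step1, real_id h (2*m) (Real.exp ((h:ℝ)*t/(2*(m:ℝ))))]
  congr 1
  refine Finset.sum_congr rfl fun j hj => ?_
  rw [Finset.mem_range] at hj
  have hexp : Real.exp ((h:ℝ)*t*(j:ℝ)/(2*(m:ℝ))) = (Real.exp ((h:ℝ)*t/(2*(m:ℝ))))^j := by
    rw [← Real.exp_nat_mul]
    congr 1
    field_simp
  have hfr : ((2*m + h - j - 1).factorial : ℝ)
      = ((2*m + (h-1-j)).choose h : ℝ) * (h.factorial:ℝ) * ((2*m - j - 1).factorial : ℝ) := by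
    rw [show 2*m + h - j - 1 = 2*m + (h-1-j) by omega]
    have hv := Nat.choose_mul_factorial_mul_factorial (show h ≤ 2*m + (h-1-j) by omega)
    rw [show 2*m + (h-1-j) - h = 2*m - j - 1 by omega] at hv
    exact_mod_cast hv.symm
  rw [hexp, hfr]
  have hne1 : (h.factorial:ℝ) ≠ 0 := Nat.cast_ne_zero.2 (Nat.factorial_ne_zero _)
  have hne2 : ((2*m - j - 1).factorial : ℝ) ≠ 0 := Nat.cast_ne_zero.2 (Nat.factorial_ne_zero _)
  field_simp
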